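/- For any finite set of candidates of size M ≥ 3, there exists a profile of three strict linear orders whose QMR digraph has a strongly connected component containing at least 3 candidates; hence the QMR output distribution has support of size at least 3! = 6 restricted to those candidates, and QMR is not a dictatorship. -/

import Mathlib

open scoped Classical

/-- The number of voters in profile `P` who rank `x` above `y`. -/
noncomputable def voteCount {α : Type*} [Fintype α] {N : ℕ}
    (P : Fin N → α → α → Prop) (x y : α) : ℕ :=
  (Finset.univ.filter fun i => P i x y).card

/-- The QMR digraph: an edge points from `x` to `y` iff at least as many voters
rank `x` above `y` as rank `y` above `x`. -/
noncomputable def qmrEdge {α : Type*} [Fintype α] {N : ℕ}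
    (P : Fin N → α → α → Prop) (x y : α) : Prop :=
  voteCount P y x ≤ voteCount P x y

/-- Same strongly connected component of a digraph. -/
def SameSCC {α : Type*} (E : α → α → Prop) (u v : α) : Prop :=
  Relation.ReflTransGen E u v ∧ Relation.ReflTransGen E v u

/-- A strict linear order `r` lies in the support of the QMR output: it respects
the topological order on distinct strongly connected components of the QMR digraph
and every unanimous pairwise preference. -/
noncomputable def inSupport {α : Type*} [Fintype α] {N : ℕ}
    (P : Fin N → α → α → Prop) (r : α → α → Prop) : Prop :=
  IsStrictTotalOrder α r ∧
  (∀ x y, qmrEdge P x y → ¬ SameSCC (qmrEdge P) x y → r x y) ∧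
  (∀ x y, (∀ i, P i x y) → r x y)

/- ### Auxiliary machinery -/

/-- Ranking key: `u` first, then `v`, then `w`, then everyone else by `e`. -/
noncomputable def qKey {α : Type*} (e : α → ℕ) (u v w x : α) : ℕ :=
  if x = u then 0 else if x = v then 1 else if x = w then 2 else 3 + e x

/-- The strict order determined by the key. -/
noncomputable def qOrd {α : Type*} (e : α → ℕ) (u v w : α) : α → α → Prop :=
  fun x y => qKey e u v w x < qKey e u v w y

lemma qKey_le_two {α : Type*} (e : α → ℕ) {u v w x : α}
    (h : x = u ∨ x = v ∨ x = w) : qKey e u v w x ≤ 2 := by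
  unfold qKey; split_ifs <;> first | omega | tauto

lemma qKey_out {α : Type*} (e : α → ℕ) {u v w x : α}
    (h1 : x ≠ u) (h2 : x ≠ v) (h3 : x ≠ w) : qKey e u v w x = 3 + e x := by
  simp [qKey, h1, h2, h3]

lemma qKey_inj {α : Type*} {e : α → ℕ} (he : Function.Injective e) {u v w : α}
    (huv : u ≠ v) (huw : u ≠ w) (hvw : v ≠ w) :
    Function.Injective (qKey e u v w) := by
  intro x y h
  unfold qKey at h
  split_ifs at h <;>
    first
      | (subst_vars; rfl)
      | (exfalso; omega)
      | (exact he (by omega))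

lemma qOrd_isto {α : Type*} {e : α → ℕ} (he : Function.Injective e) {u v w : α}
    (huv : u ≠ v) (huw : u ≠ w) (hvw : v ≠ w) :
    IsStrictTotalOrder α (qOrd e u v w) := by
  have hinj := qKey_inj he huv huw hvw
  refine { trichotomous := ?_, irrefl := ?_, trans := ?_ }
  · intro x y
    rcases lt_trichotomy (qKey e u v w x) (qKey e u v w y) with h | h | h
    · exact fun h1 _ => absurd h h1
    · exact fun _ _ => hinj h
    · exact fun _ h2 => absurd h h2
  · intro x; exact Nat.lt_irrefl _
  · intro x y z hxy hyz; exact Nat.lt_trans hxy hyz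

lemma voteCount3 {α : Type*} [Fintype α] (P : Fin 3 → α → α → Prop) (x y : α) :
    voteCount P x y =
      (if P 0 x y then 1 else 0) + (if P 1 x y then 1 else 0) +
        (if P 2 x y then 1 else 0) := by
  rw [voteCount, Finset.card_filter, Fin.sum_univ_three]

set_option maxHeartbeats 2000000 in
/-- For any candidate set of size `M ≥ 3` there is a profile of three strict
linear orders whose QMR digraph has a strongly connected component containing at
least three candidates `a, b, c`; all `3! = 6` relative orderings of `a, b, c`
occur in the support of the QMR output, and QMR is not a dictatorship. -/
theorem qmr_not_dictatorship {α : Type*} [Fintype α] (hcard : 3 ≤ Fintype.card α) :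
    ∃ P : Fin 3 → α → α → Prop,
      (∀ i, IsStrictTotalOrder α (P i)) ∧
      ∃ a b c : α, a ≠ b ∧ b ≠ c ∧ a ≠ c ∧
        SameSCC (qmrEdge P) a b ∧ SameSCC (qmrEdge P) b c ∧
          SameSCC (qmrEdge P) a c ∧
        (∃ r, inSupport P r ∧ r a b ∧ r b c) ∧
        (∃ r, inSupport P r ∧ r a c ∧ r c b) ∧
        (∃ r, inSupport P r ∧ r b a ∧ r a c) ∧
        (∃ r, inSupport P r ∧ r b c ∧ r c a) ∧
        (∃ r, inSupport P r ∧ r c a ∧ r a b) ∧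
        (∃ r, inSupport P r ∧ r c b ∧ r b a) ∧
        ¬ ∃ i : Fin 3, ∀ x y : α, (∃ r, inSupport P r ∧ r x y) ↔ P i x y := by
  classical
  set E := Fintype.equivFin α with hE
  set e : α → ℕ := fun x => (E x : ℕ) with he_def
  have he : Function.Injective e := by
    intro x y h
    exact E.injective (Fin.val_injective h)
  set a : α := E.symm ⟨0, by omega⟩ with ha
  set b : α := E.symm ⟨1, by omega⟩ with hb
  set c : α := E.symm ⟨2, by omega⟩ with hc
  have hab : a ≠ b := fun h => by simpa using congrArg Fin.val (E.symm.injective h)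
  have hbc : b ≠ c := fun h => by simpa using congrArg Fin.val (E.symm.injective h)
  have hac : a ≠ c := fun h => by simpa using congrArg Fin.val (E.symm.injective h)
  have hba := hab.symm
  have hcb := hbc.symm
  have hca := hac.symm
  set P : Fin 3 → α → α → Prop := ![qOrd e a b c, qOrd e c a b, qOrd e b c a] with hPdef
  have hP0 : P 0 = qOrd e a b c := rfl
  have hP1 : P 1 = qOrd e c a b := rfl
  have hP2 : P 2 = qOrd e b c a := rfl
  -- strict total orders
  have hISTO : ∀ i, IsStrictTotalOrder α (P i) := by
    intro i
    fin_cases i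
    · exact qOrd_isto he hab hac hbc
    · exact qOrd_isto he hca hcb hab
    · exact qOrd_isto he hbc hba hca
  have hasym : ∀ (i : Fin 3) (x y : α), P i x y → ¬ P i y x := by
    intro i x y h h'
    exact (hISTO i).irrefl x ((hISTO i).trans _ _ _ h h')
  -- generic facts about qOrd
  have keylt : ∀ u v w x y : α, (x = u ∨ x = v ∨ x = w) →
      (y ≠ u ∧ y ≠ v ∧ y ≠ w) → qOrd e u v w x y := by
    rintro u v w x y hx ⟨h1, h2, h3⟩
    have k1 := qKey_le_two e hx
    have k2 := qKey_out e h1 h2 h3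
    unfold qOrd; omega
  have keyoutiff : ∀ u v w x y : α, (x ≠ u ∧ x ≠ v ∧ x ≠ w) →
      (y ≠ u ∧ y ≠ v ∧ y ≠ w) → (qOrd e u v w x y ↔ e x < e y) := by
    rintro u v w x y ⟨h1, h2, h3⟩ ⟨h4, h5, h6⟩
    have k1 := qKey_out e h1 h2 h3
    have k2 := qKey_out e h4 h5 h6
    unfold qOrd; omega
  have oud : ∀ u v w : α, u ≠ v → u ≠ w → v ≠ w →
      qOrd e u v w u v ∧ qOrd e u v w v w ∧ qOrd e u v w u w := by
    intro u v w h1 h2 h3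
    refine ⟨?_, ?_, ?_⟩ <;>
      simp [qOrd, qKey, h1, h2, h3, Ne.symm h1, Ne.symm h2, Ne.symm h3]
  -- unanimity facts
  have unT : ∀ x y : α, (x = a ∨ x = b ∨ x = c) → (y ≠ a ∧ y ≠ b ∧ y ≠ c) →
      ∀ i : Fin 3, P i x y := by
    intro x y hx hy i
    fin_cases i
    · exact keylt a b c x y (by tauto) (by tauto)
    · exact keylt c a b x y (by tauto) (by tauto)
    · exact keylt b c a x y (by tauto) (by tauto)
  have unOut : ∀ x y : α, (x ≠ a ∧ x ≠ b ∧ x ≠ c) → (y ≠ a ∧ y ≠ b ∧ y ≠ c) →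
      e x < e y → ∀ i : Fin 3, P i x y := by
    intro x y hx hy hlt i
    fin_cases i
    · exact (keyoutiff a b c x y (by tauto) (by tauto)).2 hlt
    · exact (keyoutiff c a b x y (by tauto) (by tauto)).2 hlt
    · exact (keyoutiff b c a x y (by tauto) (by tauto)).2 hlt
  have hall : ∀ x y : α, (∀ i, P i x y) →
      voteCount P x y = 3 ∧ voteCount P y x = 0 := by
    intro x y h
    constructor <;> rw [voteCount3] <;>
      simp [h 0, h 1, h 2, hasym 0 x y (h 0), hasym 1 x y (h 1), hasym 2 x y (h 2)]
  -- counts among {a,b,c}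
  have cab : voteCount P a b = 2 ∧ voteCount P b a = 1 := by
    constructor <;> rw [voteCount3, hP0, hP1, hP2] <;>
      simp [qOrd, qKey, hab, hba, hac, hca, hbc, hcb]
  have cbc : voteCount P b c = 2 ∧ voteCount P c b = 1 := by
    constructor <;> rw [voteCount3, hP0, hP1, hP2] <;>
      simp [qOrd, qKey, hab, hba, hac, hca, hbc, hcb]
  have cca : voteCount P c a = 2 ∧ voteCount P a c = 1 := by
    constructor <;> rw [voteCount3, hP0, hP1, hP2] <;>
      simp [qOrd, qKey, hab, hba, hac, hca, hbc, hcb]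
  have Eab : qmrEdge P a b := by
    have h1 := cab.1; have h2 := cab.2; unfold qmrEdge; omega
  have Ebc : qmrEdge P b c := by
    have h1 := cbc.1; have h2 := cbc.2; unfold qmrEdge; omega
  have Eca : qmrEdge P c a := by
    have h1 := cca.1; have h2 := cca.2; unfold qmrEdge; omega
  have Sab : SameSCC (qmrEdge P) a b :=
    ⟨Relation.ReflTransGen.single Eab, (Relation.ReflTransGen.single Ebc).tail Eca⟩
  have Sbc : SameSCC (qmrEdge P) b c :=
    ⟨Relation.ReflTransGen.single Ebc, (Relation.ReflTransGen.single Eca).tail Eab⟩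
  have Sac : SameSCC (qmrEdge P) a c :=
    ⟨(Relation.ReflTransGen.single Eab).tail Ebc, Relation.ReflTransGen.single Eca⟩
  have sccrefl : ∀ z : α, SameSCC (qmrEdge P) z z := fun z =>
    ⟨Relation.ReflTransGen.refl, Relation.ReflTransGen.refl⟩
  have sccsymm : ∀ {u v : α}, SameSCC (qmrEdge P) u v → SameSCC (qmrEdge P) v u :=
    fun h => ⟨h.2, h.1⟩
  have hsccT : ∀ x y : α, (x = a ∨ x = b ∨ x = c) → (y = a ∨ y = b ∨ y = c) →
      SameSCC (qmrEdge P) x y := by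
    intro x y hx hy
    rcases hx with rfl | rfl | rfl <;> rcases hy with rfl | rfl | rfl <;>
      first
        | exact sccrefl _
        | assumption
        | exact sccsymm Sab
        | exact sccsymm Sbc
        | exact sccsymm Sac
  -- the generic support lemma
  have hsup : ∀ u v w : α, u ≠ v → u ≠ w → v ≠ w →
      (∀ x : α, (x = u ∨ x = v ∨ x = w) ↔ (x = a ∨ x = b ∨ x = c)) →
      inSupport P (qOrd e u v w) := by
    intro u v w huv huw hvw hiff
    refine ⟨qOrd_isto he huv huw hvw, ?_, ?_⟩
    · -- respects topological order on distinct SCCs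
      intro x y hedge hnscc
      rcases eq_or_ne x y with rfl | hne
      · exact absurd (sccrefl x) hnscc
      by_cases hx : x = a ∨ x = b ∨ x = c
      · by_cases hy : y = a ∨ y = b ∨ y = c
        · exact absurd (hsccT x y hx hy) hnscc
        · have hy' : y ≠ a ∧ y ≠ b ∧ y ≠ c := by tauto
          exact keylt u v w x y ((hiff x).2 hx) (by
            have := (hiff y); tauto)
      · have hx' : x ≠ a ∧ x ≠ b ∧ x ≠ c := by tauto
        by_cases hy : y = a ∨ y = b ∨ y = c
        · exfalso
          obtain ⟨h3, h0⟩ := hall y x (unT y x hy hx')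
          unfold qmrEdge at hedge
          omega
        · have hy' : y ≠ a ∧ y ≠ b ∧ y ≠ c := by tauto
          have hexy : e x ≠ e y := fun h => hne (he h)
          rcases Nat.lt_or_ge (e x) (e y) with hlt | hge
          · exact (keyoutiff u v w x y (by have := hiff x; tauto)
              (by have := hiff y; tauto)).2 hlt
          · exfalso
            have hlt' : e y < e x := by omega
            obtain ⟨h3, h0⟩ := hall y x (unOut y x hy' hx' hlt')
            unfold qmrEdge at hedge
            omega
    · -- respects unanimity
      intro x y hxy
      rcases eq_or_ne x y with rfl | hne
      · exact absurd (hxy 0) ((hISTO 0).irrefl x)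
      by_cases hx : x = a ∨ x = b ∨ x = c
      · by_cases hy : y = a ∨ y = b ∨ y = c
        · exfalso
          rcases hx with rfl | rfl | rfl <;> rcases hy with rfl | rfl | rfl
          · exact hne rfl
          · exact hasym 2 _ _ (by
              rw [hP2]; exact (oud b c a hbc hba hca).2.2) (hxy 2)
          · exact hasym 1 _ _ (by
              rw [hP1]; exact (oud c a b hca hcb hab).1) (hxy 1)
          · exact hasym 0 _ _ (by
              rw [hP0]; exact (oud a b c hab hac hbc).1) (hxy 0)
          · exact hne rfl
          · exact hasym 1 _ _ (by
              rw [hP1]; exact (oud c a b hca hcb hab).2.2) (hxy 1)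
          · exact hasym 0 _ _ (by
              rw [hP0]; exact (oud a b c hab hac hbc).2.2) (hxy 0)
          · exact hasym 0 _ _ (by
              rw [hP0]; exact (oud a b c hab hac hbc).2.1) (hxy 0)
          · exact hne rfl
        · have hy' : y ≠ a ∧ y ≠ b ∧ y ≠ c := by tauto
          exact keylt u v w x y ((hiff x).2 hx) (by have := hiff y; tauto)
      · have hx' : x ≠ a ∧ x ≠ b ∧ x ≠ c := by tauto
        by_cases hy : y = a ∨ y = b ∨ y = c
        · exfalso
          exact hasym 0 x y (hxy 0) (by
            rw [hP0]; exact keylt a b c y x hy hx')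
        · have hy' : y ≠ a ∧ y ≠ b ∧ y ≠ c := by tauto
          have hlt : e x < e y := by
            have := (hxy 0)
            rw [hP0] at this
            exact (keyoutiff a b c x y hx' hy').1 this
          exact (keyoutiff u v w x y (by have := hiff x; tauto)
            (by have := hiff y; tauto)).2 hlt
  -- the six supported orders
  have sup1 : inSupport P (qOrd e a b c) := hsup a b c hab hac hbc (fun x => by tauto)
  have sup2 : inSupport P (qOrd e a c b) := hsup a c b hac hab hcb (fun x => by tauto)
  have sup3 : inSupport P (qOrd e b a c) := hsup b a c hba hbc hac (fun x => by tauto)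
  have sup4 : inSupport P (qOrd e b c a) := hsup b c a hbc hba hca (fun x => by tauto)
  have sup5 : inSupport P (qOrd e c a b) := hsup c a b hca hcb hab (fun x => by tauto)
  have sup6 : inSupport P (qOrd e c b a) := hsup c b a hcb hca hba (fun x => by tauto)
  refine ⟨P, hISTO, a, b, c, hab, hbc, hac, Sab, Sbc, Sac, ?_, ?_, ?_, ?_, ?_, ?_, ?_⟩
  · exact ⟨qOrd e a b c, sup1, (oud a b c hab hac hbc).1, (oud a b c hab hac hbc).2.1⟩
  · exact ⟨qOrd e a c b, sup2, (oud a c b hac hab hcb).1, (oud a c b hac hab hcb).2.1⟩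
  · exact ⟨qOrd e b a c, sup3, (oud b a c hba hbc hac).1, (oud b a c hba hbc hac).2.1⟩
  · exact ⟨qOrd e b c a, sup4, (oud b c a hbc hba hca).1, (oud b c a hbc hba hca).2.1⟩
  · exact ⟨qOrd e c a b, sup5, (oud c a b hca hcb hab).1, (oud c a b hca hcb hab).2.1⟩
  · exact ⟨qOrd e c b a, sup6, (oud c b a hcb hca hba).1, (oud c b a hcb hca hba).2.1⟩
  · rintro ⟨i, hi⟩
    have h1 : ∃ r, inSupport P r ∧ r a b :=
      ⟨qOrd e a b c, sup1, (oud a b c hab hac hbc).1⟩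
    have h2 : ∃ r, inSupport P r ∧ r b a :=
      ⟨qOrd e b a c, sup3, (oud b a c hba hbc hac).1⟩
    exact hasym i a b ((hi a b).1 h1) ((hi b a).1 h2)
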